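/- Let A be a perfect MV-algebra. If ¬x ≤ x and ¬y ≤ y, then x ⊕ y = 1. -/
import Mathlib


/-- An MV-algebra `(A, ⊕, ¬, 0)`. -/
class MV (A : Type*) where
  op : A → A → A
  neg : A → A
  zero : A
  op_assoc : ∀ x y z : A, op (op x y) z = op x (op y z)
  op_comm : ∀ x y : A, op x y = op y x
  op_zero : ∀ x : A, op x zero = x
  neg_neg : ∀ x : A, neg (neg x) = x
  op_neg_zero : ∀ x : A, op x (neg zero) = neg zero
  mv6 : ∀ x y : A, op (neg (op (neg x) y)) y = op (neg (op (neg y) x)) x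

namespace MV

variable {A : Type*} [MV A]

/-- `1 := ¬0`. -/
def one : A := neg zero

/-- `x ⊙ y := ¬(¬x ⊕ ¬y)`. -/
def odot (x y : A) : A := neg (op (neg x) (neg y))

/-- `sup(x,y) := (x ⊙ ¬y) ⊕ y`. -/
def ssup (x y : A) : A := op (odot x (neg y)) y

/-- `inf(x,y) := (x ⊕ ¬y) ⊙ y`. -/
def sinf (x y : A) : A := odot (op x (neg y)) y

/-- `x ≤ y` iff `¬x ⊕ y = 1`. -/
def le (x y : A) : Prop := op (neg x) y = one

/-- `x ≤ y` iff `inf(x,y) = x`. -/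
def leInf (x y : A) : Prop := sinf x y = x

/-- `n`-fold sum `nx = x ⊕ ⋯ ⊕ x`. -/
def nsm : ℕ → A → A
  | 0, _ => zero
  | n + 1, x => op x (nsm n x)

/-- `x² := x ⊙ x`. -/
def sq (x : A) : A := odot x x

end MV

namespace MV

/-- A perfect MV-algebra: nontrivial, satisfying `x² ⊕ x² = (x ⊕ x)²` and,
for every `x`, either `x ≤ ¬x` or `¬x ≤ x`. -/
def Perfect (A : Type*) [MV A] : Prop :=
  (zero : A) ≠ one ∧
  (∀ x : A, op (sq x) (sq x) = sq (op x x)) ∧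
  (∀ x : A, le x (neg x) ∨ le (neg x) x)

end MV

namespace MV

variable {A : Type*} [MV A]

instance : Std.Associative (op : A → A → A) := ⟨op_assoc⟩
instance : Std.Commutative (op : A → A → A) := ⟨op_comm⟩

lemma zero_op (x : A) : op zero x = x := by rw [op_comm]; exact op_zero x

lemma neg_one : (neg (one : A)) = zero := neg_neg zero

lemma op_one (x : A) : op x (one : A) = one := op_neg_zero x

lemma one_op (x : A) : op (one : A) x = one := by rw [op_comm]; exact op_neg_zero x

lemma op_neg_self (y : A) : op (neg y) y = one := by
  have h := mv6 (one : A) y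
  simp only [neg_one, zero_op, op_one] at h
  exact h

lemma le_refl' (x : A) : le x x := op_neg_self x

lemma le_op_self (t x : A) : le x (op t x) := by
  show op (neg x) (op t x) = one
  calc op (neg x) (op t x) = op t (op (neg x) x) := by ac_rfl
    _ = one := by rw [op_neg_self, op_one]

lemma le_op_self' (x t : A) : le x (op x t) := by
  rw [op_comm]; exact le_op_self t x

lemma le_one' (x : A) : le x one := op_one (neg x)

lemma zero_le' (x : A) : le zero x := by
  show op (neg zero) x = one
  exact one_op x

lemma le_antisymm' {x y : A} (h1 : le x y) (h2 : le y x) : x = y := by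
  have h := mv6 x y
  rw [show op (neg x) y = one from h1, show op (neg y) x = one from h2] at h
  simp only [neg_one, zero_op] at h
  exact h.symm

lemma decomp {x y : A} (h : le x y) : op (neg (op (neg y) x)) x = y := by
  have h6 := mv6 x y
  rw [show op (neg x) y = one from h] at h6
  simp only [neg_one, zero_op] at h6
  exact h6.symm

lemma le_trans' {x y z : A} (h1 : le x y) (h2 : le y z) : le x z := by
  obtain ⟨s, hs⟩ : ∃ s, op s x = y := ⟨_, decomp h1⟩
  obtain ⟨t, ht⟩ : ∃ t, op t y = z := ⟨_, decomp h2⟩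
  show op (neg x) z = one
  rw [← ht, ← hs]
  calc op (neg x) (op t (op s x)) = op t (op s (op (neg x) x)) := by ac_rfl
    _ = one := by rw [op_neg_self, op_one, op_one]

lemma op_le_left {x y : A} (h : le x y) (z : A) : le (op x z) (op y z) := by
  obtain ⟨t, ht⟩ : ∃ t, op t x = y := ⟨_, decomp h⟩
  show op (neg (op x z)) (op y z) = one
  rw [← ht]
  calc op (neg (op x z)) (op (op t x) z)
      = op t (op (neg (op x z)) (op x z)) := by ac_rfl
    _ = one := by rw [op_neg_self, op_one]

lemma op_le_right {x y : A} (h : le x y) (z : A) : le (op z x) (op z y) := by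
  rw [op_comm z x, op_comm z y]; exact op_le_left h z

lemma op_le_op {x y z w : A} (h1 : le x y) (h2 : le z w) : le (op x z) (op y w) :=
  le_trans' (op_le_left h1 z) (op_le_right h2 y)

lemma neg_le_neg' {x y : A} (h : le x y) : le (neg y) (neg x) := by
  show op (neg (neg y)) (neg x) = one
  rw [neg_neg, op_comm]; exact h

lemma odot_le_odot {x y z w : A} (h1 : le x y) (h2 : le z w) :
    le (odot x z) (odot y w) := by
  unfold odot
  exact neg_le_neg' (op_le_op (neg_le_neg' h1) (neg_le_neg' h2))

lemma odot_comm (x y : A) : odot x y = odot y x := by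
  unfold odot; rw [op_comm]

lemma odot_le_left' (x y : A) : le (odot x y) x := by
  have h := neg_le_neg' (le_op_self' (neg x) (neg y))
  rw [neg_neg] at h
  exact h

lemma ssup_eq (x y : A) : ssup x y = op (neg (op (neg x) y)) y := by
  unfold ssup odot; rw [neg_neg]

lemma ssup_comm (x y : A) : ssup x y = ssup y x := by
  rw [ssup_eq, ssup_eq]; exact mv6 x y

lemma le_ssup_right' (x y : A) : le y (ssup x y) := by
  rw [ssup_eq]; exact le_op_self _ y

lemma le_ssup_left' (x y : A) : le x (ssup x y) := by
  rw [ssup_comm]; exact le_ssup_right' y x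

lemma ssup_of_le {x y : A} (h : le x y) : ssup x y = y := by
  rw [ssup_eq, show op (neg x) y = one from h, neg_one, zero_op]

lemma ssup_le' {x y z : A} (hx : le x z) (hy : le y z) : le (ssup x y) z := by
  have h1 : le (ssup x y) (ssup z y) := by
    unfold ssup
    exact op_le_left (odot_le_odot hx (le_refl' (neg y))) y
  rw [ssup_comm z y, ssup_of_le hy] at h1
  exact h1

lemma sinf_eq (x y : A) : sinf x y = neg (ssup (neg x) (neg y)) := by
  unfold sinf ssup odot
  simp only [neg_neg]

lemma sinf_le_left' (x y : A) : le (sinf x y) x := by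
  rw [sinf_eq]
  have h := neg_le_neg' (le_ssup_left' (neg x) (neg y))
  rw [neg_neg] at h
  exact h

lemma res_fwd {x y z : A} (h : le (odot x y) z) : le x (op (neg y) z) := by
  have h1 : le x (ssup x (neg y)) := le_ssup_left' x (neg y)
  have h2 : ssup x (neg y) = op (odot x y) (neg y) := by
    unfold ssup; rw [neg_neg]
  rw [h2] at h1
  have h3 : le (op (odot x y) (neg y)) (op z (neg y)) := op_le_left h (neg y)
  have h4 := le_trans' h1 h3
  rw [op_comm z (neg y)] at h4
  exact h4

lemma res_bwd {x y z : A} (h : le x (op (neg y) z)) : le (odot x y) z := by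
  have h1 : le (odot x y) (odot (op (neg y) z) y) := odot_le_odot h (le_refl' y)
  have h2 : odot (op (neg y) z) y = sinf z y := by
    unfold sinf; rw [op_comm (neg y) z]
  rw [h2] at h1
  exact le_trans' h1 (sinf_le_left' z y)

lemma eq_zero_of_le_zero {x : A} (h : le x zero) : x = zero :=
  le_antisymm' h (zero_le' x)

lemma rad_orthogonal {A : Type*} [MV A]
    (hnt : (zero : A) ≠ one)
    (hsq : ∀ t : A, op (sq t) (sq t) = sq (op t t))
    (hdi : ∀ t : A, le t (neg t) ∨ le (neg t) t)
    {a b : A} (ha : odot a a = zero) (hb : odot b b = zero) :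
    odot a b = zero := by
  have hc_a : le (odot a b) a := odot_le_left' a b
  have hcc : odot (odot a b) (odot a b) = zero := by
    apply eq_zero_of_le_zero
    have h := odot_le_odot hc_a hc_a
    rwa [ha] at h
  rcases hdi (op a b) with hσ | hσ
  · -- a ⊕ b is "small": then a⊙b ≤ (a⊕b)⊙(a⊕b) = 0
    have hσσ : odot (op a b) (op a b) = zero := by
      unfold le at hσ
      unfold odot
      rw [hσ]
      exact neg_one
    apply eq_zero_of_le_zero
    have h := odot_le_odot (le_op_self' a b) (le_op_self a b)
    rwa [hσσ] at h
  · -- a ⊕ b is "big": derive 0 = 1, contradiction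
    exfalso
    have hσ1 : op (op a b) (op a b) = one := by
      unfold le at hσ; rwa [neg_neg] at hσ
    have hone : (sq (one : A)) = one := by
      unfold sq odot
      rw [neg_one, op_zero]
      rfl
    have hone' : odot (one : A) one = one := hone
    have h1 : op (odot (op a b) (op a b)) (odot (op a b) (op a b)) = one := by
      have h := hsq (op a b)
      unfold sq at h
      rw [show odot (op (op a b) (op a b)) (op (op a b) (op a b)) = one by
        rw [hσ1]; exact hone'] at h
      exact h
    -- M := ssup a b ; (M⊙M) ≤ a⊙b
    have hM2 : le (odot (ssup a b) (ssup a b)) (odot a b) := by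
      apply res_bwd
      apply ssup_le'
      · apply res_fwd
        rw [odot_comm]
        apply res_bwd
        apply ssup_le'
        · apply res_fwd
          rw [ha]
          exact zero_le' _
        · apply res_fwd
          rw [odot_comm b a]
          exact le_refl' _
      · apply res_fwd
        rw [odot_comm]
        apply res_bwd
        apply ssup_le'
        · apply res_fwd
          exact le_refl' _
        · apply res_fwd
          rw [odot_comm b b, hb]
          exact zero_le' _
    have hMM : le (op a b) (op (ssup a b) (ssup a b)) :=
      op_le_op (le_ssup_left' a b) (le_ssup_right' a b)
    -- (a⊕b)⊙(a⊕b) ≤ (a⊙b)⊕(a⊙b)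
    have hσ2 : le (odot (op a b) (op a b)) (op (odot a b) (odot a b)) := by
      have s1 : le (odot (op a b) (op a b))
          (odot (op (ssup a b) (ssup a b)) (op (ssup a b) (ssup a b))) :=
        odot_le_odot hMM hMM
      have s2 : odot (op (ssup a b) (ssup a b)) (op (ssup a b) (ssup a b))
          = op (odot (ssup a b) (ssup a b)) (odot (ssup a b) (ssup a b)) := by
        have h := hsq (ssup a b)
        unfold sq at h
        exact h.symm
      rw [s2] at s1
      exact le_trans' s1 (op_le_op hM2 hM2)
    -- ¬(2c) ≤ 2c where c = a⊙b
    have h2c1 : le (neg (op (odot a b) (odot a b))) (op (odot a b) (odot a b)) := by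
      have hn : le (neg (op (odot a b) (odot a b))) (neg (odot (op a b) (op a b))) :=
        neg_le_neg' hσ2
      have hmid : le (neg (odot (op a b) (op a b))) (odot (op a b) (op a b)) := by
        show op (neg (neg (odot (op a b) (op a b)))) (odot (op a b) (op a b)) = one
        rw [neg_neg]; exact h1
      exact le_trans' (le_trans' hn hmid) hσ2
    -- (2c)⊙(2c) = 0, hence 2c ≤ ¬(2c)
    have h2csq : odot (op (odot a b) (odot a b)) (op (odot a b) (odot a b)) = zero := by
      have h := hsq (odot a b)
      unfold sq at h
      rw [hcc, op_zero] at h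
      exact h.symm
    have h2c2 : le (op (odot a b) (odot a b)) (neg (op (odot a b) (odot a b))) := by
      show op (neg (op (odot a b) (odot a b))) (neg (op (odot a b) (odot a b))) = one
      have hE : neg (odot (op (odot a b) (odot a b)) (op (odot a b) (odot a b)))
          = op (neg (op (odot a b) (odot a b))) (neg (op (odot a b) (odot a b))) := by
        unfold odot; rw [neg_neg]
      rw [← hE, h2csq]
      rfl
    have heq : op (odot a b) (odot a b) = neg (op (odot a b) (odot a b)) :=
      le_antisymm' h2c2 h2c1
    have hee : op (op (odot a b) (odot a b)) (op (odot a b) (odot a b)) = one := by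
      have step : op (op (odot a b) (odot a b)) (op (odot a b) (odot a b))
          = op (op (odot a b) (odot a b)) (neg (op (odot a b) (odot a b))) := by
        rw [← heq]
      rw [step, op_comm, op_neg_self]
    have hfin : (zero : A) = one := by
      have h := hsq (op (odot a b) (odot a b))
      unfold sq at h
      rw [hee, h2csq, op_zero] at h
      rw [hone'] at h
      exact h
    exact hnt hfin

end MV

open MV in
/-- In a perfect MV-algebra, if `¬x ≤ x` and `¬y ≤ y` then `x ⊕ y = 1`. -/
theorem perfect_coradical_op_one {A : Type*} [MV A] (hA : Perfect A) :
    ∀ x y : A, le (neg x) x → le (neg y) y → op x y = one := by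
  obtain ⟨hnt, hsq, hdi⟩ := hA
  intro x y hx hy
  have hx' : op x x = one := by unfold le at hx; rwa [MV.neg_neg] at hx
  have hy' : op y y = one := by unfold le at hy; rwa [MV.neg_neg] at hy
  have ha : odot (neg x) (neg x) = zero := by
    unfold odot
    simp only [MV.neg_neg]
    rw [hx']
    exact neg_one
  have hb : odot (neg y) (neg y) = zero := by
    unfold odot
    simp only [MV.neg_neg]
    rw [hy']
    exact neg_one
  have h0 : odot (neg x) (neg y) = zero := rad_orthogonal hnt hsq hdi ha hb
  have h1 := congrArg neg h0
  unfold odot at h1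
  simp only [MV.neg_neg] at h1
  exact h1
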